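/- Let σ be a nondecreasing sigmoidal function satisfying (Σ1), (Σ2), (Σ3), let f: [a,b] → ℝ be bounded, and let F_n be the associated neural network operators. Then for every x ∈ [a,b] at which f is continuous, lim_{n→+∞} F_n(f, x) = f(x). -/

import Mathlib

open Filter Topology MeasureTheory

/-- The density (kernel) function generated by a sigmoidal function. -/
noncomputable def phiFn (σ : ℝ → ℝ) (x : ℝ) : ℝ := (σ (x + 1) - σ (x - 1)) / 2

/-- σ is a (measurable) sigmoidal function. -/
def Sigmoidal (σ : ℝ → ℝ) : Prop :=
  Measurable σ ∧ Tendsto σ atBot (𝓝 0) ∧ Tendsto σ atTop (𝓝 1)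

/-- (Σ1): σ(x) - 1/2 is an odd function. -/
def Sigma1 (σ : ℝ → ℝ) : Prop := ∀ x : ℝ, σ (-x) - 1/2 = -(σ x - 1/2)

/-- (Σ2): σ ∈ C²(ℝ) and σ is concave on [0, +∞). -/
def Sigma2 (σ : ℝ → ℝ) : Prop := ContDiff ℝ 2 σ ∧ ConcaveOn ℝ (Set.Ici 0) σ

/-- (Σ3): σ(x) = O(|x|^{-α-1}) as x → -∞, with α > 0. -/
def Sigma3 (σ : ℝ → ℝ) (α : ℝ) : Prop :=
  0 < α ∧ σ =O[atBot] fun x : ℝ => |x| ^ (-α - 1)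

/-- (Σ4): σ ∈ C^m(ℝ), m ≥ 2, and for each s = 1,…,m there are constants
`K s, C s > 0` with |σ^{(s)}(x)| ≤ C s * |x|^{-β-1} for |x| ≥ K s, where β > m + 1. -/
def Sigma4 (σ : ℝ → ℝ) (m : ℕ) (β : ℝ) (K C : ℕ → ℝ) : Prop :=
  2 ≤ m ∧ (m : ℝ) + 1 < β ∧ ContDiff ℝ m σ ∧
    ∀ s : ℕ, 1 ≤ s → s ≤ m → 0 < K s ∧ 0 < C s ∧
      ∀ x : ℝ, K s ≤ |x| → |iteratedDeriv s σ x| ≤ C s * |x| ^ (-β - 1)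

/-- Algebraic moment of order ν of Φ. -/
noncomputable def algMoment (Φ : ℝ → ℝ) (ν : ℕ) (x : ℝ) : ℝ :=
  ∑' k : ℤ, Φ (x - (k : ℝ)) * ((k : ℝ) - x) ^ ν

/-- (Σ5): the algebraic moments of order j = 1,…,m of φ_σ are constants A j. -/
def Sigma5 (σ : ℝ → ℝ) (m : ℕ) (A : ℕ → ℝ) : Prop :=
  ∀ j : ℕ, 1 ≤ j → j ≤ m → ∀ x : ℝ, algMoment (phiFn σ) j x = A j

/-- Truncated algebraic moment of order ν of Φ (associated with integers a < b). -/
noncomputable def truncMoment (Φ : ℝ → ℝ) (ν : ℕ) (a b : ℤ) (n : ℕ) (u : ℝ) : ℝ :=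
  ∑ k ∈ Finset.Icc ((n : ℤ) * a) ((n : ℤ) * b), Φ (u - (k : ℝ)) * ((k : ℝ) - u) ^ ν

/-- The ν-th discrete absolute moment function of Φ (before taking sup over u). -/
noncomputable def discMoment (Φ : ℝ → ℝ) (ν : ℝ) (u : ℝ) : ℝ :=
  ∑' k : ℤ, |Φ (u - (k : ℝ))| * |u - (k : ℝ)| ^ ν

/-- The Riemann zeta function (as a real series), ζ(p) = ∑_{i≥1} i^{-p}. -/
noncomputable def zetaR (p : ℝ) : ℝ := ∑' i : ℕ, ((i : ℝ) + 1) ^ (-p)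

/-- The NN operator F_n activated by σ. -/
noncomputable def Fop (σ : ℝ → ℝ) (f : ℝ → ℝ) (a b : ℝ) (n : ℕ) (x : ℝ) : ℝ :=
  (∑ k ∈ Finset.Icc ⌈(n : ℝ) * a⌉ ⌊(n : ℝ) * b⌋, f ((k : ℝ) / n) * phiFn σ ((n : ℝ) * x - k)) /
    (∑ k ∈ Finset.Icc ⌈(n : ℝ) * a⌉ ⌊(n : ℝ) * b⌋, phiFn σ ((n : ℝ) * x - k))

/-- The modified NN operator F̃_n (integer endpoints a < b). -/
noncomputable def Ftil (σ : ℝ → ℝ) (f : ℝ → ℝ) (a b : ℤ) (n : ℕ) (x : ℝ) : ℝ :=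
  ∑ k ∈ Finset.Icc ((n : ℤ) * a) ((n : ℤ) * b), f ((k : ℝ) / n) * phiFn σ ((n : ℝ) * x - (k : ℝ))

/-- Sup-norm of g on [a,b]. -/
noncomputable def supNormOn (g : ℝ → ℝ) (a b : ℝ) : ℝ := ⨆ x : Set.Icc a b, |g x|

/-- Modulus of continuity of g on [a,b]. -/
noncomputable def modulus (g : ℝ → ℝ) (a b h : ℝ) : ℝ :=
  sSup {y : ℝ | ∃ u ∈ Set.Icc a b, ∃ v ∈ Set.Icc a b, |u - v| ≤ h ∧ y = |g u - g v|}

/-- Discrete absolute moment (natural order ν) of Φ: sup over u of the moment series. -/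
noncomputable def dmomentN (Φ : ℝ → ℝ) (ν : ℕ) : ℝ :=
  ⨆ u : ℝ, ∑' k : ℤ, |Φ (u - (k : ℝ))| * |u - (k : ℝ)| ^ ν


section aux
variable {σ : ℝ → ℝ}

lemma sig_neg (h1 : Sigma1 σ) (x : ℝ) : σ (-x) = 1 - σ x := by have := h1 x; linarith

lemma sig_zero (h1 : Sigma1 σ) : σ 0 = 1/2 := by have := h1 0; simp at this; linarith

lemma sig_le_one (hσ : Sigmoidal σ) (hmono : Monotone σ) (x : ℝ) : σ x ≤ 1 :=
  ge_of_tendsto hσ.2.2 (eventually_atTop.2 ⟨x, fun _ hy => hmono hy⟩)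

lemma sig_nonneg (hσ : Sigmoidal σ) (hmono : Monotone σ) (x : ℝ) : 0 ≤ σ x :=
  le_of_tendsto hσ.2.1 (eventually_atBot.2 ⟨x, fun _ hy => hmono hy⟩)

lemma phi_nonneg (hmono : Monotone σ) (t : ℝ) : 0 ≤ phiFn σ t := by
  have : σ (t-1) ≤ σ (t+1) := hmono (by linarith)
  unfold phiFn; linarith

lemma phi_even (h1 : Sigma1 σ) (t : ℝ) : phiFn σ (-t) = phiFn σ t := by
  unfold phiFn
  have a1 : σ (-t+1) = 1 - σ (t-1) := by
    rw [show (-t+1 : ℝ) = -(t-1) by ring, sig_neg h1]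
  have a2 : σ (-t-1) = 1 - σ (t+1) := by
    rw [show (-t-1 : ℝ) = -(t+1) by ring, sig_neg h1]
  rw [a1, a2]; ring

lemma sig_two (hσ : Sigmoidal σ) (hmono : Monotone σ) (h1 : Sigma1 σ) (h2 : Sigma2 σ) :
    1/2 < σ 2 := by
  by_contra h
  push_neg at h
  have h0 : σ 0 = 1/2 := sig_zero h1
  have h2' : σ 2 = 1/2 := le_antisymm h (h0 ▸ hmono (by norm_num))
  obtain ⟨t, ht3, htσ⟩ : ∃ t : ℝ, 3 ≤ t ∧ 3/4 < σ t := by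
    have h34 : ∀ᶠ y in atTop, 3/4 < σ y :=
      hσ.2.2.eventually (eventually_gt_nhds (by norm_num))
    obtain ⟨t, ht1, ht2⟩ := (h34.and (eventually_ge_atTop (3:ℝ))).exists
    exact ⟨t, ht2, ht1⟩
  have ht0 : (0:ℝ) < t := by linarith
  have key := h2.2.2 (Set.mem_Ici.2 (le_refl (0:ℝ))) (show t ∈ Set.Ici (0:ℝ) by simp [le_of_lt ht0])
    (show (0:ℝ) ≤ 1 - 2/t by rw [sub_nonneg, div_le_one ht0]; linarith)
    (show (0:ℝ) ≤ 2/t by positivity)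
    (by ring)
  simp only [smul_eq_mul, mul_zero, zero_add] at key
  rw [show (2/t) * t = 2 by field_simp] at key
  have h2t : 0 < 2/t := by positivity
  nlinarith [mul_lt_mul_of_pos_left htσ h2t]

lemma phi_lower (hσ : Sigmoidal σ) (hmono : Monotone σ) (h1 : Sigma1 σ) (h2 : Sigma2 σ) :
    ∀ t : ℝ, |t| ≤ 1 → (σ 2 - 1/2)/2 ≤ phiFn σ t := by
  have h0 : σ 0 = 1/2 := sig_zero h1
  have H : ∀ t : ℝ, 0 ≤ t → t ≤ 1 → (σ 2 - 1/2)/2 ≤ phiFn σ t := by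
    intro t ht0 ht1
    have e1 : σ (t-1) = 1 - σ (1-t) := by
      rw [show (t-1:ℝ) = -(1-t) by ring, sig_neg h1]
    have c1 := h2.2.2 (Set.mem_Ici.2 (le_refl (0:ℝ)))
      (show (2:ℝ) ∈ Set.Ici (0:ℝ) by norm_num)
      (show (0:ℝ) ≤ (1-t)/2 by linarith) (show (0:ℝ) ≤ (t+1)/2 by linarith) (by ring)
    have c2 := h2.2.2 (Set.mem_Ici.2 (le_refl (0:ℝ)))
      (show (2:ℝ) ∈ Set.Ici (0:ℝ) by norm_num)
      (show (0:ℝ) ≤ (1+t)/2 by linarith) (show (0:ℝ) ≤ (1-t)/2 by linarith) (by ring)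
    simp only [smul_eq_mul, mul_zero, zero_add] at c1 c2
    rw [show (t+1)/2 * 2 = t+1 by ring] at c1
    rw [show (1-t)/2 * 2 = 1-t by ring] at c2
    unfold phiFn
    rw [e1]
    nlinarith
  intro t ht
  rcases le_total 0 t with h | h
  · exact H t h (by rw [abs_of_nonneg h] at ht; exact ht)
  · rw [← phi_even h1]
    exact H (-t) (by linarith) (by rw [abs_of_nonpos h] at ht; linarith)

lemma phi_decay (hσ : Sigmoidal σ) (hmono : Monotone σ) (h1 : Sigma1 σ) {α : ℝ}
    (h3 : Sigma3 σ α) :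
    ∃ C : ℝ, 0 < C ∧ ∃ R : ℝ, 2 ≤ R ∧
      ∀ t : ℝ, R ≤ |t| → phiFn σ t ≤ C/2 * (|t| - 1) ^ (-α - 1) := by
  obtain ⟨C, hCpos, hC⟩ := h3.2.exists_pos
  rw [Asymptotics.isBigOWith_iff] at hC
  obtain ⟨T, hT⟩ := eventually_atBot.1 hC
  refine ⟨C, hCpos, -(min T (-1)) + 1, by have h := min_le_right T (-1); linarith, ?_⟩
  have hbound : ∀ y : ℝ, y ≤ min T (-1) → σ y ≤ C * |y| ^ (-α - 1) := by
    intro y hy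
    have := hT y (hy.trans (min_le_left _ _))
    rw [Real.norm_eq_abs, Real.norm_eq_abs,
      abs_of_nonneg (Real.rpow_nonneg (abs_nonneg y) _)] at this
    exact (le_abs_self _).trans this
  intro t ht
  set T' := min T (-1) with hT'
  have hT'le : T' ≤ -1 := min_le_right _ _
  rcases le_total 0 t with h | h
  · rw [abs_of_nonneg h] at ht ⊢
    have e1 : σ (t-1) = 1 - σ (1-t) := by
      rw [show (t-1:ℝ) = -(1-t) by ring, sig_neg h1]
    have hb := hbound (1-t) (by linarith)
    rw [abs_of_nonpos (by linarith)] at hb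
    have hle1 := sig_le_one hσ hmono (t+1)
    unfold phiFn
    rw [e1]
    rw [show (-(1-t):ℝ) = t - 1 by ring] at hb
    linarith
  · rw [abs_of_nonpos h] at ht ⊢
    have hb := hbound (t+1) (by linarith)
    rw [abs_of_nonpos (by linarith), show -(t+1) = -t - 1 by ring] at hb
    have hnn := sig_nonneg hσ hmono (t-1)
    unfold phiFn
    linarith

end aux

lemma tail_tendsto {α B d : ℝ} (hα : 0 < α) (hB : 0 ≤ B) (hd : 0 < d) :
    Tendsto (fun n : ℕ => ((n:ℝ)*B + 1) * ((n:ℝ)*d - 1) ^ (-α - 1)) atTop (𝓝 0) := by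
  have hnd : Tendsto (fun n : ℕ => (n:ℝ)*d - 1) atTop atTop :=
    tendsto_atTop_add_const_right _ _ (tendsto_natCast_atTop_atTop.atTop_mul_const hd)
  have hpow : Tendsto (fun n : ℕ => ((n:ℝ)*d - 1) ^ (-α)) atTop (𝓝 0) :=
    (tendsto_rpow_neg_atTop hα).comp hnd
  set K := (B+1)/d + 1 with hK
  have hK0 : 0 < K := by positivity
  apply squeeze_zero'
  · filter_upwards [hnd.eventually_ge_atTop 1] with n hn
    have h0 : (0:ℝ) < (n:ℝ)*d - 1 := by linarith
    have := Real.rpow_nonneg h0.le (-α - 1)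
    have hnB : (0:ℝ) ≤ (n:ℝ)*B + 1 := by positivity
    positivity
  · filter_upwards [hnd.eventually_ge_atTop 1,
      tendsto_natCast_atTop_atTop.eventually_ge_atTop (K+1)] with n hn hnK
    have h0 : (0:ℝ) < (n:ℝ)*d - 1 := by linarith
    have hlin : (n:ℝ)*B + 1 ≤ K * ((n:ℝ)*d - 1) := by
      have : K * d = B + 1 + d := by rw [hK]; field_simp
      nlinarith
    calc ((n:ℝ)*B + 1) * ((n:ℝ)*d - 1) ^ (-α - 1)
        ≤ K * ((n:ℝ)*d - 1) * ((n:ℝ)*d - 1) ^ (-α - 1) :=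
          mul_le_mul_of_nonneg_right hlin (Real.rpow_nonneg h0.le _)
      _ = K * ((n:ℝ)*d - 1) ^ (-α) := by
          have e := Real.rpow_add h0 1 (-α-1)
          rw [Real.rpow_one] at e
          rw [mul_assoc, ← e]
          congr 1
          ring
  · simpa using hpow.const_mul K


set_option maxHeartbeats 1000000 in
theorem pointwise_convergence_NN (σ : ℝ → ℝ) (α : ℝ) (hσ : Sigmoidal σ) (hmono : Monotone σ)
    (h1 : Sigma1 σ) (h2 : Sigma2 σ) (h3 : Sigma3 σ α)
    (a b : ℝ) (hab : a < b) (f : ℝ → ℝ) (hfb : ∃ M : ℝ, ∀ y ∈ Set.Icc a b, |f y| ≤ M)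
    (x : ℝ) (hx : x ∈ Set.Icc a b) (hfc : ContinuousWithinAt f (Set.Icc a b) x) :
    Tendsto (fun n : ℕ => Fop σ f a b n x) atTop (𝓝 (f x)) := by
  classical
  obtain ⟨M, hM⟩ := hfb
  have hM0 : 0 ≤ M := (abs_nonneg _).trans (hM x hx)
  have hc : 0 < (σ 2 - 1/2)/2 := by have := sig_two hσ hmono h1 h2; linarith
  set c := (σ 2 - 1/2)/2 with hcdef
  obtain ⟨C, hCpos, R, hR2, hphiR⟩ := phi_decay hσ hmono h1 h3
  rw [Metric.tendsto_atTop]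
  intro ε hε
  obtain ⟨δ, hδpos, hδ⟩ := Metric.continuousWithinAt_iff.mp hfc (ε/2) (by linarith)
  set d := δ/2 with hddef
  have hd : 0 < d := by positivity
  have htail := (tail_tendsto h3.1 (show (0:ℝ) ≤ b - a by linarith) hd).const_mul (M*C/c)
  rw [mul_zero] at htail
  have hev : ∀ᶠ n : ℕ in atTop,
      (M*C/c) * (((n:ℝ)*(b-a) + 1) * ((n:ℝ)*d - 1) ^ (-α - 1)) < ε/2 :=
    htail.eventually_lt_const (by linarith)
  obtain ⟨N1, hN1⟩ := eventually_atTop.1 hev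
  obtain ⟨N0, hN0⟩ := exists_nat_ge (max (max 1 (2/(b-a))) (R/d))
  refine ⟨max N0 N1, fun n hn => ?_⟩
  have hnN0 : (N0:ℝ) ≤ (n:ℝ) := Nat.cast_le.mpr ((le_max_left _ _).trans hn)
  have hmx : max (max 1 (2/(b-a))) (R/d) ≤ (n:ℝ) := hN0.trans hnN0
  have hn1 : (1:ℝ) ≤ (n:ℝ) := le_trans (le_trans (le_max_left _ _) (le_max_left _ _)) hmx
  have npos : (0:ℝ) < (n:ℝ) := by linarith
  have hba : (0:ℝ) < b - a := by linarith
  have hnba : 2 ≤ (n:ℝ)*(b-a) := by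
    have := le_trans (le_trans (le_max_right _ _) (le_max_left _ _)) hmx
    rw [div_le_iff₀ hba] at this
    linarith [this]
  have hndR : R ≤ (n:ℝ)*d := by
    have := le_trans (le_max_right _ _) hmx
    rw [div_le_iff₀ hd] at this
    linarith [this]
  have hnd1 : 1 ≤ (n:ℝ)*d - 1 := by linarith
  have hnd0 : (0:ℝ) < (n:ℝ)*d - 1 := by linarith
  -- index set nonempty
  have hS : ⌈(n:ℝ)*a⌉ ≤ ⌊(n:ℝ)*b⌋ := by
    rw [Int.le_floor]
    have := Int.ceil_lt_add_one ((n:ℝ)*a)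
    nlinarith
  set S := Finset.Icc ⌈(n:ℝ)*a⌉ ⌊(n:ℝ)*b⌋ with hSdef
  set D := ∑ k ∈ S, phiFn σ ((n:ℝ)*x - k) with hDdef
  -- denominator lower bound
  set k0 : ℤ := max ⌈(n:ℝ)*a⌉ ⌊(n:ℝ)*x⌋ with hk0def
  have hk0mem : k0 ∈ S := Finset.mem_Icc.2 ⟨le_max_left _ _,
    max_le hS (Int.floor_mono (mul_le_mul_of_nonneg_left hx.2 npos.le))⟩
  have hnear : |(n:ℝ)*x - k0| ≤ 1 := by
    have l1 := Int.floor_le ((n:ℝ)*x)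
    have l2 := Int.lt_floor_add_one ((n:ℝ)*x)
    rcases le_or_gt (⌈(n:ℝ)*a⌉) (⌊(n:ℝ)*x⌋) with hcase | hcase
    · rw [hk0def, max_eq_right hcase, abs_le]
      constructor <;> push_cast <;> linarith
    · have hle : ⌈(n:ℝ)*a⌉ ≤ ⌈(n:ℝ)*x⌉ :=
        Int.ceil_mono (mul_le_mul_of_nonneg_left hx.1 npos.le)
      have h2' : ⌈(n:ℝ)*a⌉ ≤ ⌊(n:ℝ)*x⌋ + 1 := le_trans hle (Int.ceil_le_floor_add_one _)
      have hk0 : k0 = ⌊(n:ℝ)*x⌋ + 1 := by rw [hk0def, max_eq_left hcase.le]; omega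
      rw [hk0, abs_le]
      push_cast
      constructor <;> linarith
  have hDc : c ≤ D := by
    have hsingle : phiFn σ ((n:ℝ)*x - (k0:ℝ)) ≤ D :=
      Finset.single_le_sum (f := fun k : ℤ => phiFn σ ((n:ℝ)*x - (k:ℝ)))
        (fun i _ => phi_nonneg hmono _) hk0mem
    exact le_trans (phi_lower hσ hmono h1 h2 _ hnear) hsingle
  have hDpos : 0 < D := lt_of_lt_of_le hc hDc
  -- points k/n lie in [a,b]
  have hmem : ∀ k ∈ S, (k:ℝ)/(n:ℝ) ∈ Set.Icc a b := by
    intro k hk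
    rw [hSdef, Finset.mem_Icc] at hk
    have hkl : ((⌈(n:ℝ)*a⌉ : ℤ) : ℝ) ≤ (k:ℝ) := Int.cast_le.2 hk.1
    have hku : ((k:ℤ):ℝ) ≤ ((⌊(n:ℝ)*b⌋ : ℤ) : ℝ) := Int.cast_le.2 hk.2
    have hcl := Int.le_ceil ((n:ℝ)*a)
    have hfl := Int.floor_le ((n:ℝ)*b)
    constructor
    · rw [le_div_iff₀ npos]; nlinarith
    · rw [div_le_iff₀ npos]; nlinarith
  -- rewrite the difference
  have hdiff : Fop σ f a b n x - f x
      = (∑ k ∈ S, (f ((k:ℝ)/(n:ℝ)) - f x) * phiFn σ ((n:ℝ)*x - k)) / D := by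
    have e : ∑ k ∈ S, (f ((k:ℝ)/(n:ℝ)) - f x) * phiFn σ ((n:ℝ)*x - k)
        = (∑ k ∈ S, f ((k:ℝ)/(n:ℝ)) * phiFn σ ((n:ℝ)*x - k)) - f x * D := by
      rw [hDdef, Finset.mul_sum, ← Finset.sum_sub_distrib]
      apply Finset.sum_congr rfl
      intro k _
      ring
    rw [Fop, e, sub_div, mul_div_assoc, div_self (ne_of_gt hDpos), mul_one]
  have habs : |Fop σ f a b n x - f x|
      ≤ (∑ k ∈ S, |f ((k:ℝ)/(n:ℝ)) - f x| * phiFn σ ((n:ℝ)*x - k)) / D := by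
    rw [hdiff, abs_div, abs_of_pos hDpos]
    gcongr
    calc |∑ k ∈ S, (f ((k:ℝ)/(n:ℝ)) - f x) * phiFn σ ((n:ℝ)*x - k)|
        ≤ ∑ k ∈ S, |(f ((k:ℝ)/(n:ℝ)) - f x) * phiFn σ ((n:ℝ)*x - k)| :=
          Finset.abs_sum_le_sum_abs _ _
      _ = ∑ k ∈ S, |f ((k:ℝ)/(n:ℝ)) - f x| * phiFn σ ((n:ℝ)*x - k) := by
          apply Finset.sum_congr rfl
          intro k _
          rw [abs_mul, abs_of_nonneg (phi_nonneg hmono _)]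
  -- split near / far
  set P : ℤ → Prop := fun k => |(n:ℝ)*x - k| ≤ (n:ℝ)*d with hPdef
  have hsplit := Finset.sum_filter_add_sum_filter_not S P
    (fun k => |f ((k:ℝ)/(n:ℝ)) - f x| * phiFn σ ((n:ℝ)*x - k))
  -- near part
  have hnearsum : ∑ k ∈ S.filter P, |f ((k:ℝ)/(n:ℝ)) - f x| * phiFn σ ((n:ℝ)*x - k)
      ≤ (ε/2) * D := by
    calc ∑ k ∈ S.filter P, |f ((k:ℝ)/(n:ℝ)) - f x| * phiFn σ ((n:ℝ)*x - k)
        ≤ ∑ k ∈ S.filter P, (ε/2) * phiFn σ ((n:ℝ)*x - k) := by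
          apply Finset.sum_le_sum
          intro k hk
          rw [Finset.mem_filter] at hk
          apply mul_le_mul_of_nonneg_right _ (phi_nonneg hmono _)
          apply le_of_lt
          have hdist : dist ((k:ℝ)/(n:ℝ)) x < δ := by
            rw [Real.dist_eq]
            have e1 : (k:ℝ)/(n:ℝ) - x = -(((n:ℝ)*x - k)/(n:ℝ)) := by
              field_simp
              ring
            rw [e1, abs_neg, abs_div, abs_of_pos npos, div_lt_iff₀ npos]
            have hPk : |(n:ℝ)*x - k| ≤ (n:ℝ)*d := hk.2
            have : (n:ℝ)*d < δ * (n:ℝ) := by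
              rw [hddef]
              nlinarith
            linarith
          have := hδ (hmem k hk.1) hdist
          rw [Real.dist_eq] at this
          exact this
      _ = (ε/2) * ∑ k ∈ S.filter P, phiFn σ ((n:ℝ)*x - k) := by rw [Finset.mul_sum]
      _ ≤ (ε/2) * D := by
          apply mul_le_mul_of_nonneg_left _ (by linarith)
          rw [hDdef]
          exact Finset.sum_le_sum_of_subset_of_nonneg (Finset.filter_subset _ _)
            (fun i _ _ => phi_nonneg hmono _)
  -- far part
  have hfarterm : ∀ k ∈ S.filter (fun k => ¬ P k),
      |f ((k:ℝ)/(n:ℝ)) - f x| * phiFn σ ((n:ℝ)*x - k)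
        ≤ 2*M * (C/2 * ((n:ℝ)*d - 1) ^ (-α - 1)) := by
    intro k hk
    rw [Finset.mem_filter] at hk
    have hfar : (n:ℝ)*d < |(n:ℝ)*x - k| := not_le.mp hk.2
    have hphik : phiFn σ ((n:ℝ)*x - k) ≤ C/2 * ((n:ℝ)*d - 1) ^ (-α - 1) := by
      refine le_trans (hphiR _ (le_trans hndR hfar.le)) ?_
      apply mul_le_mul_of_nonneg_left _ (by positivity)
      exact Real.rpow_le_rpow_of_nonpos hnd0 (by linarith) (by linarith [h3.1])
    have hfval : |f ((k:ℝ)/(n:ℝ)) - f x| ≤ 2*M := by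
      calc |f ((k:ℝ)/(n:ℝ)) - f x| ≤ |f ((k:ℝ)/(n:ℝ))| + |f x| := abs_sub _ _
        _ ≤ M + M := add_le_add (hM _ (hmem k hk.1)) (hM x hx)
        _ = 2*M := by ring
    exact mul_le_mul hfval hphik (phi_nonneg hmono _) (by positivity)
  have hcard : (((S.filter (fun k => ¬ P k)).card : ℕ) : ℝ) ≤ (n:ℝ)*(b-a) + 1 := by
    have h1' : (S.filter (fun k => ¬ P k)).card ≤ S.card := Finset.card_filter_le _ _
    have h2' : (S.card : ℝ) ≤ (n:ℝ)*(b-a) + 1 := by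
      rw [hSdef, Int.card_Icc]
      have hXnn : (0:ℤ) ≤ ⌊(n:ℝ)*b⌋ + 1 - ⌈(n:ℝ)*a⌉ := by omega
      have hcast : (((⌊(n:ℝ)*b⌋ + 1 - ⌈(n:ℝ)*a⌉).toNat : ℕ) : ℝ)
          = ((⌊(n:ℝ)*b⌋ : ℝ) + 1 - (⌈(n:ℝ)*a⌉ : ℝ)) := by
        exact_mod_cast Int.toNat_of_nonneg hXnn
      rw [hcast]
      have hcl := Int.le_ceil ((n:ℝ)*a)
      have hfl := Int.floor_le ((n:ℝ)*b)
      push_cast at hcl hfl ⊢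
      nlinarith
    exact le_trans (Nat.cast_le.2 h1') h2'
  have hrpownn : (0:ℝ) ≤ ((n:ℝ)*d - 1) ^ (-α - 1) := Real.rpow_nonneg hnd0.le _
  have hfarsum : ∑ k ∈ S.filter (fun k => ¬ P k),
      |f ((k:ℝ)/(n:ℝ)) - f x| * phiFn σ ((n:ℝ)*x - k)
      ≤ ((n:ℝ)*(b-a) + 1) * (2*M * (C/2 * ((n:ℝ)*d - 1) ^ (-α - 1))) := by
    calc ∑ k ∈ S.filter (fun k => ¬ P k),
        |f ((k:ℝ)/(n:ℝ)) - f x| * phiFn σ ((n:ℝ)*x - k)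
        ≤ ((S.filter (fun k => ¬ P k)).card : ℕ) •
            (2*M * (C/2 * ((n:ℝ)*d - 1) ^ (-α - 1))) :=
          Finset.sum_le_card_nsmul _ _ _ hfarterm
      _ = (((S.filter (fun k => ¬ P k)).card : ℕ) : ℝ)
            * (2*M * (C/2 * ((n:ℝ)*d - 1) ^ (-α - 1))) := by rw [nsmul_eq_mul]
      _ ≤ ((n:ℝ)*(b-a) + 1) * (2*M * (C/2 * ((n:ℝ)*d - 1) ^ (-α - 1))) := by
          apply mul_le_mul_of_nonneg_right hcard
          positivity
  -- put together
  have final : |Fop σ f a b n x - f x|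
      ≤ ε/2 + (M*C/c) * (((n:ℝ)*(b-a) + 1) * ((n:ℝ)*d - 1) ^ (-α - 1)) := by
    refine habs.trans ?_
    rw [← hsplit, add_div]
    have t1 : (∑ k ∈ S.filter P, |f ((k:ℝ)/(n:ℝ)) - f x| * phiFn σ ((n:ℝ)*x - k)) / D
        ≤ ε/2 := by
      rw [div_le_iff₀ hDpos]
      exact hnearsum
    have hfarnn : 0 ≤ ∑ k ∈ S.filter (fun k => ¬ P k),
        |f ((k:ℝ)/(n:ℝ)) - f x| * phiFn σ ((n:ℝ)*x - k) :=
      Finset.sum_nonneg fun k _ => mul_nonneg (abs_nonneg _) (phi_nonneg hmono _)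
    have t2 : (∑ k ∈ S.filter (fun k => ¬ P k),
        |f ((k:ℝ)/(n:ℝ)) - f x| * phiFn σ ((n:ℝ)*x - k)) / D
        ≤ (M*C/c) * (((n:ℝ)*(b-a) + 1) * ((n:ℝ)*d - 1) ^ (-α - 1)) := by
      have hBnn : 0 ≤ ((n:ℝ)*(b-a) + 1) * (2*M * (C/2 * ((n:ℝ)*d - 1) ^ (-α - 1))) :=
        mul_nonneg (by nlinarith) (mul_nonneg (by positivity)
          (mul_nonneg (by positivity) hrpownn))
      calc _ ≤ (((n:ℝ)*(b-a) + 1) * (2*M * (C/2 * ((n:ℝ)*d - 1) ^ (-α - 1)))) / c :=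
            div_le_div₀ hBnn hfarsum hc hDc
        _ = (M*C/c) * (((n:ℝ)*(b-a) + 1) * ((n:ℝ)*d - 1) ^ (-α - 1)) := by
            field_simp
    linarith
  have hGn := hN1 n ((le_max_right _ _).trans hn)
  rw [Real.dist_eq]
  calc |Fop σ f a b n x - f x|
      ≤ ε/2 + (M*C/c) * (((n:ℝ)*(b-a) + 1) * ((n:ℝ)*d - 1) ^ (-α - 1)) := final
    _ < ε/2 + ε/2 := by linarith
    _ = ε := by ring
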